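/- Let ε ∈ (0, π/3), let P ≥ 1 be an integer, and let 1 ≤ k ≤ 2P. Let β̃₁, …, β̃_{2P} ∈ (−π/2, π/2) be angles such that Σ_{j=1}^{2P} e^{iβ̃_j} is a real number, such that β̃_j ∈ (π/2 − ε/2, π/2) for 1 ≤ j ≤ k (the 'problematic' angles), and such that β̃_j ∈ (−π/2 + 3ε/2, π/2 − ε/2) for k < j ≤ 2P. Then k/(2P) < 1 / (2 + (cos(ε/2) − cos(3ε/2))/cos(3ε/2)); equivalently k·cos(ε/2) < (2P − k)·cos(3ε/2). -/
import Mathlib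


open Real

/-- Counting estimate on the 'problematic' rhombus angles: if the sum
`Σ_j e^{iβ̃_j}` is real, the fraction of angles in `(π/2 - ε/2, π/2)` is bounded strictly
below `1/2` by the stated explicit constant. -/
theorem stmt_2 (ε : ℝ) (hε : ε ∈ Set.Ioo 0 (π / 3)) (P : ℕ) (hP : 1 ≤ P)
    (k : ℕ) (hk1 : 1 ≤ k) (hk2 : k ≤ 2 * P)
    (βt : Fin (2 * P) → ℝ)
    (hrange : ∀ j, βt j ∈ Set.Ioo (-(π / 2)) (π / 2))
    (hreal : (∑ j, Complex.exp ((βt j : ℂ) * Complex.I)).im = 0)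
    (hprob : ∀ j : Fin (2 * P), (j : ℕ) < k → βt j ∈ Set.Ioo (π / 2 - ε / 2) (π / 2))
    (hok : ∀ j : Fin (2 * P), k ≤ (j : ℕ) →
      βt j ∈ Set.Ioo (-(π / 2) + 3 * ε / 2) (π / 2 - ε / 2)) :
    (k : ℝ) / (2 * P) < 1 / (2 + (Real.cos (ε / 2) - Real.cos (3 * ε / 2)) / Real.cos (3 * ε / 2)) ∧
    (k : ℝ) * Real.cos (ε / 2) < (2 * (P : ℝ) - (k : ℝ)) * Real.cos (3 * ε / 2) := by
  obtain ⟨hε0, hε3⟩ := hε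
  have hπ := Real.pi_pos
  set c1 := Real.cos (ε / 2) with hc1
  set c2 := Real.cos (3 * ε / 2) with hc2
  have hc1pos : 0 < c1 := Real.cos_pos_of_mem_Ioo ⟨by linarith, by linarith⟩
  have hc2pos : 0 < c2 := Real.cos_pos_of_mem_Ioo ⟨by linarith, by linarith⟩
  have hsum : ∑ j, Real.sin (βt j) = 0 := by
    simpa [Complex.im_sum, Complex.exp_ofReal_mul_I_im] using hreal
  haveI : NeZero (2 * P) := ⟨by omega⟩
  have hne : (Finset.univ : Finset (Fin (2 * P))).Nonempty := Finset.univ_nonempty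
  have hmono := Real.strictMonoOn_sin
  have hlt : ∑ j : Fin (2 * P), (if (j : ℕ) < k then c1 else -c2) <
      ∑ j, Real.sin (βt j) := by
    apply Finset.sum_lt_sum_of_nonempty hne
    intro j _
    by_cases hj : (j : ℕ) < k
    · simp only [hj, if_true]
      have hb := hprob j hj
      have h1 : Real.sin (π / 2 - ε / 2) < Real.sin (βt j) := by
        apply hmono ⟨by linarith, by linarith⟩
          ⟨(hrange j).1.le, (hrange j).2.le⟩ hb.1
      rwa [Real.sin_pi_div_two_sub] at h1
    · simp only [hj, if_false]
      have hb := hok j (le_of_not_gt hj)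
      have h1 : Real.sin (-(π / 2) + 3 * ε / 2) < Real.sin (βt j) := by
        apply hmono ⟨by linarith, by linarith⟩
          ⟨(hrange j).1.le, (hrange j).2.le⟩ hb.1
      have h2 : Real.sin (-(π / 2) + 3 * ε / 2) = -c2 := by
        rw [show -(π / 2) + 3 * ε / 2 = -(π / 2 - 3 * ε / 2) by ring,
          Real.sin_neg, Real.sin_pi_div_two_sub]
      rwa [h2] at h1
  have hcount : ∑ j : Fin (2 * P), (if (j : ℕ) < k then c1 else -c2) =
      (k : ℝ) * c1 + ((2 * P - k : ℕ) : ℝ) * (-c2) := by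
    rw [Fin.sum_univ_eq_sum_range (fun i => if i < k then c1 else -c2) (2 * P)]
    rw [Finset.range_eq_Ico, ← Finset.sum_Ico_consecutive _ (Nat.zero_le k) hk2]
    rw [Finset.sum_congr rfl (fun i hi => if_pos (Finset.mem_Ico.mp hi).2),
      Finset.sum_congr rfl (fun i hi => if_neg (not_lt.mpr (Finset.mem_Ico.mp hi).1))]
    simp [Nat.card_Ico, mul_comm]
  have hcast : ((2 * P - k : ℕ) : ℝ) = 2 * (P : ℝ) - (k : ℝ) := by
    push_cast [Nat.cast_sub hk2]
    ring
  have hkey : (k : ℝ) * c1 < (2 * (P : ℝ) - (k : ℝ)) * c2 := by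
    rw [hcount, hcast, hsum] at hlt
    linarith
  refine ⟨?_, hkey⟩
  have hP' : (1 : ℝ) ≤ (P : ℝ) := by exact_mod_cast hP
  have hP2 : (0 : ℝ) < 2 * (P : ℝ) := by linarith
  have hDeq : 2 + (c1 - c2) / c2 = (c1 + c2) / c2 := by
    field_simp
    ring
  rw [hDeq, div_lt_div_iff₀ hP2 (by positivity), mul_div_assoc', div_lt_iff₀ hc2pos]
  nlinarith [hkey]
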